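/- Over 𝔽₂, the following three identities hold (commutativity of the state-cube face in case 3.b.i, where circle b is homotopically trivial, a and c are nontrivial, and the total merged circle abc is trivial): (Δ¹ ⊗ id) ∘ Δ⁰ = (id ⊗ Δ²) ∘ Δ⁰ as maps V → V⊗V⊗V; (m¹ ⊗ id) ∘ (id ⊗ Δ²) = Δ⁰ ∘ m⁰ as maps V⊗V → V⊗V; and m⁰ ∘ (m¹ ⊗ id) = m⁰ ∘ (id ⊗ m²) as maps V⊗V⊗V → V. -/

import Mathlib

open TensorProduct

noncomputable section

/-- The ground field `𝔽₂`. -/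
abbrev F2 : Type := ZMod 2

/-- The two-dimensional `𝔽₂`-vector space `V` with basis `v₊, v₋`,
realized as pairs of coordinates in this basis. -/
abbrev V : Type := F2 × F2

/-- The basis vector `v₊`. -/
def vp : V := (1, 0)

/-- The basis vector `v₋`. -/
def vm : V := (0, 1)

/-- Helper: the bilinear map associated to a pair of bilinear coordinate forms. -/
def bil (f : V → V → V)
    (ha : ∀ x x' y, f (x + x') y = f x y + f x' y)
    (hs : ∀ (c : F2) x y, f (c • x) y = c • f x y)
    (ha' : ∀ x y y', f x (y + y') = f x y + f x y')
    (hs' : ∀ (c : F2) x y, f x (c • y) = c • f x y) :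
    V ⊗[F2] V →ₗ[F2] V :=
  TensorProduct.lift (LinearMap.mk₂ F2 f ha hs ha' hs')

/-- The multiplication `m` of the Khovanov complex:
`m(v₊⊗v₊)=v₊, m(v₊⊗v₋)=v₋, m(v₋⊗v₊)=v₋, m(v₋⊗v₋)=0`. -/
def mKh : V ⊗[F2] V →ₗ[F2] V :=
  bil (fun x y => (x.1 * y.1, x.1 * y.2 + x.2 * y.1))
    (by intros; apply Prod.ext <;> simp <;> ring)
    (by intros; apply Prod.ext <;> simp [smul_eq_mul] <;> ring)
    (by intros; apply Prod.ext <;> simp <;> ring)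
    (by intros; apply Prod.ext <;> simp [smul_eq_mul] <;> ring)

/-- The map `m⁰`: `m⁰(v₊⊗v₊)=0, m⁰(v₊⊗v₋)=v₋, m⁰(v₋⊗v₊)=v₋, m⁰(v₋⊗v₋)=0`. -/
def m0 : V ⊗[F2] V →ₗ[F2] V :=
  bil (fun x y => (0, x.1 * y.2 + x.2 * y.1))
    (by intros; apply Prod.ext <;> simp <;> ring)
    (by intros; apply Prod.ext <;> simp [smul_eq_mul] <;> ring)
    (by intros; apply Prod.ext <;> simp <;> ring)
    (by intros; apply Prod.ext <;> simp [smul_eq_mul] <;> ring)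

/-- The map `m¹`: `m¹(v₊⊗v₊)=v₊, m¹(v₊⊗v₋)=0, m¹(v₋⊗v₊)=v₋, m¹(v₋⊗v₋)=0`. -/
def m1 : V ⊗[F2] V →ₗ[F2] V :=
  bil (fun x y => (x.1 * y.1, x.2 * y.1))
    (by intros; apply Prod.ext <;> simp <;> ring)
    (by intros; apply Prod.ext <;> simp [smul_eq_mul] <;> ring)
    (by intros; apply Prod.ext <;> simp <;> ring)
    (by intros; apply Prod.ext <;> simp [smul_eq_mul] <;> ring)

/-- The map `m²`: `m²(v₊⊗v₊)=v₊, m²(v₊⊗v₋)=v₋, m²(v₋⊗v₊)=0, m²(v₋⊗v₋)=0`. -/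
def m2 : V ⊗[F2] V →ₗ[F2] V :=
  bil (fun x y => (x.1 * y.1, x.1 * y.2))
    (by intros; apply Prod.ext <;> simp <;> ring)
    (by intros; apply Prod.ext <;> simp [smul_eq_mul] <;> ring)
    (by intros; apply Prod.ext <;> simp <;> ring)
    (by intros; apply Prod.ext <;> simp [smul_eq_mul] <;> ring)

/-- Helper: the linear map `V → V ⊗ V` sending `v₊ ↦ a` and `v₋ ↦ b`. -/
def diag (a b : V ⊗[F2] V) : V →ₗ[F2] V ⊗[F2] V :=
  (LinearMap.fst F2 F2 F2).smulRight a + (LinearMap.snd F2 F2 F2).smulRight b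

/-- The comultiplication `Δ`: `Δ(v₊)=v₊⊗v₋+v₋⊗v₊, Δ(v₋)=v₋⊗v₋`. -/
def ΔKh : V →ₗ[F2] V ⊗[F2] V := diag (vp ⊗ₜ vm + vm ⊗ₜ vp) (vm ⊗ₜ vm)

/-- The map `Δ⁰`: `Δ⁰(v₊)=v₊⊗v₋+v₋⊗v₊, Δ⁰(v₋)=0`. -/
def Δ0 : V →ₗ[F2] V ⊗[F2] V := diag (vp ⊗ₜ vm + vm ⊗ₜ vp) 0

/-- The map `Δ¹`: `Δ¹(v₊)=v₊⊗v₋, Δ¹(v₋)=v₋⊗v₋`. -/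
def Δ1 : V →ₗ[F2] V ⊗[F2] V := diag (vp ⊗ₜ vm) (vm ⊗ₜ vm)

/-- The map `Δ²`: `Δ²(v₊)=v₋⊗v₊, Δ²(v₋)=v₋⊗v₋`. -/
def Δ2 : V →ₗ[F2] V ⊗[F2] V := diag (vm ⊗ₜ vp) (vm ⊗ₜ vm)

/-- The associator `(V ⊗ V) ⊗ V ≃ V ⊗ (V ⊗ V)` as a linear map. -/
noncomputable def α : (V ⊗[F2] V) ⊗[F2] V →ₗ[F2] V ⊗[F2] (V ⊗[F2] V) :=
  (TensorProduct.assoc F2 V V V).toLinearMap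

/-- The inverse associator as a linear map. -/
noncomputable def αinv : V ⊗[F2] (V ⊗[F2] V) →ₗ[F2] (V ⊗[F2] V) ⊗[F2] V :=
  (TensorProduct.assoc F2 V V V).symm.toLinearMap

/-- case 3.b.i face commutativity:
`(Δ¹ ⊗ id) ∘ Δ⁰ = (id ⊗ Δ²) ∘ Δ⁰`, `(m¹ ⊗ id) ∘ (id ⊗ Δ²) = Δ⁰ ∘ m⁰`,
`m⁰ ∘ (m¹ ⊗ id) = m⁰ ∘ (id ⊗ m²)`. -/
theorem face_case_3bi :
    α ∘ₗ Δ1.rTensor V ∘ₗ Δ0 = Δ2.lTensor V ∘ₗ Δ0 ∧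
    m1.rTensor V ∘ₗ αinv ∘ₗ Δ2.lTensor V = Δ0 ∘ₗ m0 ∧
    m0 ∘ₗ m1.rTensor V = m0 ∘ₗ m2.lTensor V ∘ₗ α := by
  refine ⟨?_, ?_, ?_⟩
  · apply LinearMap.ext; intro x
    simp [α, Δ0, Δ1, Δ2, diag, vp, vm, TensorProduct.assoc_tmul]
    abel
  · apply TensorProduct.ext'; intro x y
    simp [αinv, Δ0, Δ2, m0, m1, bil, diag, vp, vm, TensorProduct.smul_tmul',
      TensorProduct.tmul_add, TensorProduct.tmul_smul]
    exact add_comm _ _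
  · apply TensorProduct.ext_threefold; intro x y z
    simp [α, m0, m1, m2, bil, TensorProduct.assoc_tmul]
    ring
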